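/- (Theorem 4, large-b_max gradient.) Let N ≥ 1, let y_1, …, y_M ∈ ℝ^N with positive weights w_i^y summing to one, let x_1, …, x_L ∈ ℝ^N with positive weights w_i^x summing to one, and fix ξ ∈ {1,…,L}, η ∈ {1,…,N} with x_ξ ≠ y_i for all i and x_ξ ≠ x_i for all i ≠ ξ. For b_max > 0 let G_ξ^{(η)}(b_max) = (π^{N/2}/2) w_ξ^x [ Σ_{i=1}^L w_i^x (x_ξ^{(η)} - x_i^{(η)}) Ei(-‖x_ξ - x_i‖²/(4 b_max²)) - Σ_{i=1}^M w_i^y (x_ξ^{(η)} - y_i^{(η)}) Ei(-‖x_ξ - y_i‖²/(4 b_max²)) ] be the exact partial derivative of the distance from Theorem 3 (the i = ξ term interpreted as 0). Then, as b_max → ∞, G_ξ^{(η)}(b_max) - (π^{N/2}/2) w_ξ^x [ Σ_{i=1}^L w_i^x (x_ξ^{(η)} - x_i^{(η)}) log(‖x_ξ - x_i‖²) - Σ_{i=1}^M w_i^y (x_ξ^{(η)} - y_i^{(η)}) log(‖x_ξ - y_i‖²) + C_{b_max} · (Σ_{i=1}^L w_i^x x_i^{(η)} - Σ_{i=1}^M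 w_i^y y_i^{(η)}) ] tends to 0, where C_{b_max} = log(4 b_max²) - γ and the i = ξ term of the first sum is interpreted as 0. -/

import Mathlib

open MeasureTheory Real Filter

/-- `negEi z` is the exponential integral `Ei(-z)`, defined for `z > 0` by
`Ei(-z) = -∫_z^∞ (e^{-t}/t) dt`. -/
noncomputable def negEi (z : ℝ) : ℝ := -∫ t in Set.Ioi z, Real.exp (-t) / t

section Aux
open Set

lemma int_f0 {z : ℝ} (hz : 0 < z) :
    IntegrableOn (fun t : ℝ => Real.exp (-t) / t) (Set.Ioi z) volume := by
  have hmeas : AEStronglyMeasurable (fun t : ℝ => Real.exp (-t) / t) (volume.restrict (Set.Ioi z)) := by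
    apply ContinuousOn.aestronglyMeasurable _ measurableSet_Ioi
    intro t ht
    exact (Real.continuous_exp.comp continuous_neg).continuousAt.continuousWithinAt.div
      continuousWithinAt_id (hz.trans ht).ne'
  have h1 : IntegrableOn (fun t : ℝ => Real.exp (-1 * t)) (Set.Ioi z) volume :=
    exp_neg_integrableOn_Ioi z zero_lt_one
  refine Integrable.mono' (h1.div_const z) hmeas
    (ae_restrict_of_forall_mem measurableSet_Ioi fun t ht => ?_)
  have ht0 : 0 < t := hz.trans ht
  rw [Real.norm_eq_abs, abs_of_pos (div_pos (Real.exp_pos _) ht0), neg_one_mul]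
  exact div_le_div_of_nonneg_left (Real.exp_pos _).le hz (le_of_lt ht)


lemma abs_log_le {t : ℝ} (ht : 0 < t) : |Real.log t| ≤ 2 / Real.sqrt t + 2 * Real.sqrt t := by
  have hst : 0 < Real.sqrt t := Real.sqrt_pos.mpr ht
  have h1 : Real.log t ≤ 2 * Real.sqrt t := by
    have h := Real.log_le_sub_one_of_pos hst
    rw [Real.log_sqrt ht.le] at h
    nlinarith
  have h2 : -Real.log t ≤ 2 / Real.sqrt t := by
    have h := Real.log_le_sub_one_of_pos (Real.sqrt_pos.mpr (inv_pos.mpr ht))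
    rw [Real.log_sqrt (inv_pos.mpr ht).le, Real.log_inv, Real.sqrt_inv] at h
    rw [div_eq_mul_inv]
    nlinarith [inv_pos.mpr hst]
  rw [abs_le]
  constructor
  · have : 0 ≤ 2 * Real.sqrt t := by positivity
    linarith
  · have : 0 ≤ 2 / Real.sqrt t := by positivity
    linarith


lemma int_f1 : IntegrableOn (fun t : ℝ => Real.exp (-t) * Real.log t) (Set.Ioi 0) volume := by
  have hmeas : AEStronglyMeasurable (fun t : ℝ => Real.exp (-t) * Real.log t)
      (volume.restrict (Set.Ioi (0:ℝ))) := by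
    apply ContinuousOn.aestronglyMeasurable _ measurableSet_Ioi
    intro t ht
    exact (Real.continuous_exp.comp continuous_neg).continuousAt.continuousWithinAt.mul
      ((Real.continuousAt_log (ne_of_gt ht)).continuousWithinAt)
  have h1 : IntegrableOn (fun t : ℝ => Real.exp (-t) * t ^ ((1/2 : ℝ) - 1)) (Set.Ioi 0) volume :=
    Real.GammaIntegral_convergent (by norm_num)
  have h2 : IntegrableOn (fun t : ℝ => Real.exp (-t) * t ^ ((3/2 : ℝ) - 1)) (Set.Ioi 0) volume :=
    Real.GammaIntegral_convergent (by norm_num)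
  refine Integrable.mono' (((h1.const_mul 2).add (h2.const_mul 2)))
    hmeas (ae_restrict_of_forall_mem measurableSet_Ioi fun t ht => ?_)
  have ht0 : (0:ℝ) < t := ht
  have hs1 : t ^ ((1/2 : ℝ) - 1) = (Real.sqrt t)⁻¹ := by
    rw [show (1/2:ℝ)-1 = -(1/2) by norm_num, Real.rpow_neg ht0.le, Real.sqrt_eq_rpow]
  have hs2 : t ^ ((3/2 : ℝ) - 1) = Real.sqrt t := by
    rw [Real.sqrt_eq_rpow]; norm_num
  simp only [Pi.add_apply]
  rw [Real.norm_eq_abs, abs_mul, abs_of_pos (Real.exp_pos _), hs1, hs2]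
  have := abs_log_le ht0
  have he : (0:ℝ) < Real.exp (-t) := Real.exp_pos _
  have hle : Real.exp (-t) ≤ 1 := Real.exp_le_one_iff.mpr (by linarith)
  calc Real.exp (-t) * |Real.log t| ≤ Real.exp (-t) * (2 / Real.sqrt t + 2 * Real.sqrt t) := by
        exact mul_le_mul_of_nonneg_left this he.le
    _ = 2 * (Real.exp (-t) * (Real.sqrt t)⁻¹) + 2 * (Real.exp (-t) * Real.sqrt t) := by
        rw [div_eq_mul_inv]; ring


lemma negEi_sub {a b : ℝ} (ha : 0 < a) (hb : 0 < b) :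
    negEi b - negEi a = ∫ t in a..b, Real.exp (-t) / t := by
  have key : ∀ u v : ℝ, 0 < u → u ≤ v →
      negEi v - negEi u = ∫ t in u..v, Real.exp (-t) / t := by
    intro u v hu huv
    have hsplit : ∫ t in Set.Ioi u, Real.exp (-t) / t
        = (∫ t in Set.Ioc u v, Real.exp (-t) / t) + ∫ t in Set.Ioi v, Real.exp (-t) / t := by
      rw [← setIntegral_union (Set.Ioc_disjoint_Ioi le_rfl) measurableSet_Ioi
        ((int_f0 hu).mono_set Set.Ioc_subset_Ioi_self) ((int_f0 hu).mono_set
          (Set.Ioi_subset_Ioi huv)), Set.Ioc_union_Ioi_eq_Ioi huv]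
    rw [intervalIntegral.integral_of_le huv, negEi, negEi]
    linarith
  rcases le_total a b with h | h
  · exact key a b ha h
  · have h2 : (∫ t in a..b, Real.exp (-t) / t) = -∫ t in b..a, Real.exp (-t) / t :=
      intervalIntegral.integral_symm b a
    have := key b a hb h
    linarith

lemma hasDerivAt_negEi {z : ℝ} (hz : 0 < z) :
    HasDerivAt negEi (Real.exp (-z) / z) z := by
  have hcont : ContinuousOn (fun t : ℝ => Real.exp (-t) / t) (Set.Ioi 0) := by
    intro t ht
    exact (Real.continuous_exp.comp continuous_neg).continuousAt.continuousWithinAt.div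
      continuousWithinAt_id (ne_of_gt ht)
  have hd : HasDerivAt (fun u => negEi z + ∫ t in z..u, Real.exp (-t) / t)
      (Real.exp (-z) / z) z := by
    refine HasDerivAt.const_add _ ?_
    exact intervalIntegral.integral_hasDerivAt_right (IntervalIntegrable.refl)
      (hcont.stronglyMeasurableAtFilter isOpen_Ioi z hz)
      ((hcont.continuousAt (Ioi_mem_nhds hz)))
  refine hd.congr_of_eventuallyEq ?_
  filter_upwards [Ioi_mem_nhds hz] with u hu
  have := negEi_sub hz (show (0:ℝ) < u from hu)
  linarith

noncomputable def gg (z : ℝ) : ℝ := negEi z - Real.exp (-z) * Real.log z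

lemma hasDerivAt_gg {z : ℝ} (hz : 0 < z) :
    HasDerivAt gg (Real.exp (-z) * Real.log z) z := by
  have hd1 : HasDerivAt (fun u : ℝ => Real.exp (-u)) (Real.exp (-z) * (-1)) z :=
    HasDerivAt.exp (hasDerivAt_neg z)
  have hd2 : HasDerivAt Real.log z⁻¹ z := Real.hasDerivAt_log hz.ne'
  have := (hasDerivAt_negEi hz).sub (hd1.mul hd2)
  convert this using 1
  · rfl
  · rfl
  · rfl
  · rw [div_eq_mul_inv]; ring

lemma norm_negEi_le {b : ℝ} (hb : 0 < b) : ‖negEi b‖ ≤ Real.exp (-b) / b := by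
  rw [negEi, norm_neg]
  have hint : IntegrableOn (fun t : ℝ => Real.exp (-t) / b) (Set.Ioi b) volume := by
    have h1 := (exp_neg_integrableOn_Ioi b zero_lt_one).div_const b
    simp only [neg_one_mul] at h1
    exact h1
  have hle : ‖∫ t in Set.Ioi b, Real.exp (-t) / t‖ ≤ ∫ t in Set.Ioi b, Real.exp (-t) / b := by
    refine norm_integral_le_of_norm_le hint
      (ae_restrict_of_forall_mem measurableSet_Ioi fun t ht => ?_)
    have ht0 : 0 < t := hb.trans ht
    rw [Real.norm_eq_abs, abs_of_pos (div_pos (Real.exp_pos _) ht0)]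
    exact div_le_div_of_nonneg_left (Real.exp_pos _).le hb (le_of_lt ht)
  calc ‖∫ t in Set.Ioi b, Real.exp (-t) / t‖ ≤ ∫ t in Set.Ioi b, Real.exp (-t) / b := hle
    _ = (∫ t in Set.Ioi b, Real.exp (-t)) / b := by rw [integral_div]
    _ = Real.exp (-b) / b := by rw [integral_exp_neg_Ioi]

lemma negEi_tendsto : Tendsto negEi atTop (nhds 0) := by
  apply squeeze_zero_norm' (a := fun b => Real.exp (-b) / b)
  · filter_upwards [eventually_gt_atTop (0:ℝ)] with b hb using norm_negEi_le hb
  · have h1 : Tendsto (fun b : ℝ => Real.exp (-b)) atTop (nhds 0) :=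
      Real.tendsto_exp_neg_atTop_nhds_zero
    have h2 : Tendsto (fun b : ℝ => b⁻¹) atTop (nhds 0) := tendsto_inv_atTop_zero
    simpa [div_eq_mul_inv] using h1.mul h2

lemma gg_tendsto : Tendsto gg atTop (nhds 0) := by
  have h2 : Tendsto (fun b : ℝ => Real.exp (-b) * Real.log b) atTop (nhds 0) := by
    apply squeeze_zero_norm' (a := fun b : ℝ => b ^ 1 * Real.exp (-b))
    · filter_upwards [eventually_ge_atTop (1:ℝ)] with b hb
      have hb0 : 0 < b := lt_of_lt_of_le zero_lt_one hb
      rw [Real.norm_eq_abs, abs_mul, abs_of_pos (Real.exp_pos _),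
        abs_of_nonneg (Real.log_nonneg hb), pow_one, mul_comm b]
      have : Real.log b ≤ b := (Real.log_le_sub_one_of_pos hb0).trans (by linarith)
      exact mul_le_mul_of_nonneg_left this (Real.exp_pos _).le
    · exact Real.tendsto_pow_mul_exp_neg_atTop_nhds_zero 1
  have h3 := negEi_tendsto.sub h2
  rw [sub_zero] at h3
  exact h3

lemma integral_Ioi_f1 {z : ℝ} (hz : 0 < z) :
    ∫ t in Set.Ioi z, Real.exp (-t) * Real.log t = -gg z := by
  have := integral_Ioi_of_hasDerivAt_of_tendsto
    (f := gg) (f' := fun t => Real.exp (-t) * Real.log t) (a := z) (m := 0)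
    (hasDerivAt_gg hz).continuousAt.continuousWithinAt
    (fun t ht => hasDerivAt_gg (hz.trans ht))
    (int_f1.mono_set (Set.Ioi_subset_Ioi hz.le)) gg_tendsto
  rw [this]; ring


lemma integral_f1_eq :
    ∫ t in Set.Ioi (0:ℝ), Real.exp (-t) * Real.log t = -Real.eulerMascheroniConstant := by
  have h1 : HasDerivAt Complex.GammaIntegral
      (∫ t : ℝ in Set.Ioi 0, (t:ℂ) ^ ((1:ℂ) - 1) * (Real.log t * Real.exp (-t))) 1 :=
    Complex.hasDerivAt_GammaIntegral (by norm_num)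
  have hIeq : (∫ t : ℝ in Set.Ioi 0, (t:ℂ) ^ ((1:ℂ) - 1) * (Real.log t * Real.exp (-t)))
      = ((∫ t : ℝ in Set.Ioi 0, Real.log t * Real.exp (-t) : ℝ) : ℂ) := by
    have hco : ∀ r : ℝ, Complex.ofReal r = @RCLike.ofReal ℂ _ r := fun r => rfl
    conv_rhs => rw [hco, ← _root_.integral_ofReal]
    apply integral_congr_ae
    filter_upwards with t
    rw [← hco]
    push_cast
    rw [sub_self, Complex.cpow_zero, one_mul]
  rw [hIeq] at h1
  have hre : HasDerivAt (fun x : ℝ => (Complex.GammaIntegral x).re)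
      (∫ t : ℝ in Set.Ioi 0, Real.log t * Real.exp (-t)) 1 := by
    simpa using h1.real_of_complex
  have heq : Real.Gamma =ᶠ[nhds (1:ℝ)] (fun x : ℝ => (Complex.GammaIntegral x).re) := by
    filter_upwards [Ioi_mem_nhds (show (0:ℝ) < 1 by norm_num)] with u hu
    rw [← Complex.Gamma_eq_integral (by simpa using (hu : (0:ℝ) < u)), Complex.Gamma_ofReal,
      Complex.ofReal_re]
  have hG : HasDerivAt Real.Gamma (∫ t : ℝ in Set.Ioi 0, Real.log t * Real.exp (-t)) 1 :=
    hre.congr_of_eventuallyEq heq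
  have := hG.unique Real.hasDerivAt_Gamma_one
  rw [← this]
  apply integral_congr_ae
  filter_upwards with t
  ring


lemma f1_split {z : ℝ} (hz : 0 < z) :
    ∫ t in Set.Ioi (0:ℝ), Real.exp (-t) * Real.log t
      = (∫ t in Set.Ioc 0 z, Real.exp (-t) * Real.log t)
        + ∫ t in Set.Ioi z, Real.exp (-t) * Real.log t := by
  rw [← setIntegral_union (Set.Ioc_disjoint_Ioi le_rfl) measurableSet_Ioi
    (int_f1.mono_set Set.Ioc_subset_Ioi_self) (int_f1.mono_set (Set.Ioi_subset_Ioi hz.le)),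
    Set.Ioc_union_Ioi_eq_Ioi hz.le]

lemma termB_tendsto :
    Tendsto (fun z : ℝ => ∫ t in Set.Ioc 0 z, Real.exp (-t) * Real.log t)
      (nhdsWithin 0 (Set.Ioi 0)) (nhds 0) := by
  apply squeeze_zero_norm' (a := fun z : ℝ => 2 * (2 * Real.sqrt z) + 2 * z)
  · filter_upwards [Ioc_mem_nhdsGT zero_lt_one] with z hz
    obtain ⟨hz0, hz1⟩ := hz
    have hrint : IntegrableOn (fun t : ℝ => 2 * t ^ (-(1/2):ℝ) + 2) (Set.Ioc 0 z) volume := by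
      apply Integrable.add
      · exact ((intervalIntegral.intervalIntegrable_rpow' (by norm_num)).1.const_mul 2)
      · exact integrableOn_const measure_Ioc_lt_top.ne
    have hbound : ∀ t ∈ Set.Ioc (0:ℝ) z, ‖Real.exp (-t) * Real.log t‖
        ≤ 2 * t ^ (-(1/2):ℝ) + 2 := by
      intro t ⟨ht0, htz⟩
      have ht1 : t ≤ 1 := htz.trans hz1
      have hst : 0 < Real.sqrt t := Real.sqrt_pos.mpr ht0
      have h1 : Real.exp (-t) ≤ 1 := Real.exp_le_one_iff.mpr (by linarith)
      have hrp : t ^ (-(1/2):ℝ) = (Real.sqrt t)⁻¹ := by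
        rw [Real.rpow_neg ht0.le, Real.sqrt_eq_rpow]
      rw [Real.norm_eq_abs, abs_mul, abs_of_pos (Real.exp_pos _), hrp]
      have h2 : Real.sqrt t ≤ 1 := by
        rw [show (1:ℝ) = Real.sqrt 1 by simp]; exact Real.sqrt_le_sqrt ht1
      have h3 := abs_log_le ht0
      have h4 : Real.exp (-t) * |Real.log t| ≤ |Real.log t| := by
        nlinarith [abs_nonneg (Real.log t)]
      have h5 : 2 / Real.sqrt t = 2 * (Real.sqrt t)⁻¹ := by rw [div_eq_mul_inv]
      nlinarith
    have hle := norm_integral_le_of_norm_le hrint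
      (ae_restrict_of_forall_mem measurableSet_Ioc hbound)
    have hval : ∫ t in Set.Ioc (0:ℝ) z, (2 * t ^ (-(1/2):ℝ) + 2)
        = 2 * (2 * Real.sqrt z) + 2 * z := by
      rw [← intervalIntegral.integral_of_le hz0.le]
      rw [intervalIntegral.integral_add
        ((intervalIntegral.intervalIntegrable_rpow' (by norm_num)).const_mul 2)
        intervalIntegrable_const]
      rw [intervalIntegral.integral_const_mul, integral_rpow (Or.inl (by norm_num)),
        intervalIntegral.integral_const]
      rw [Real.sqrt_eq_rpow]
      norm_num
      ring
    rw [← hval]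
    exact hle
  · have h : Tendsto (fun z : ℝ => 2 * (2 * Real.sqrt z) + 2 * z) (nhds 0) (nhds 0) := by
      have h1 : Tendsto (fun z : ℝ => Real.sqrt z) (nhds 0) (nhds 0) := by
        simpa using Real.continuous_sqrt.tendsto 0
      have := ((h1.const_mul 2).const_mul 2).add ((tendsto_id (x := nhds (0:ℝ))).const_mul 2)
      simpa using this
    exact h.mono_left nhdsWithin_le_nhds

lemma negEi_sub_log_tendsto :
    Tendsto (fun z : ℝ => negEi z - Real.log z) (nhdsWithin 0 (Set.Ioi 0))
      (nhds Real.eulerMascheroniConstant) := by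
  have hA : Tendsto (fun z : ℝ => (Real.exp (-z) - 1) * Real.log z)
      (nhdsWithin 0 (Set.Ioi 0)) (nhds 0) := by
    apply squeeze_zero_norm' (a := fun z : ℝ => |Real.log z * z|)
    · filter_upwards [Ioc_mem_nhdsGT zero_lt_one] with z hz
      obtain ⟨hz0, hz1⟩ := hz
      have h1 : 1 - z ≤ Real.exp (-z) := by
        have := Real.add_one_le_exp (-z); linarith
      have h2 : Real.exp (-z) ≤ 1 := Real.exp_le_one_iff.mpr (by linarith)
      rw [Real.norm_eq_abs, abs_mul, abs_mul, abs_of_pos hz0]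
      have h3 : |Real.exp (-z) - 1| ≤ z := by rw [abs_le]; constructor <;> linarith
      have := abs_nonneg (Real.log z)
      calc |Real.exp (-z) - 1| * |Real.log z| ≤ z * |Real.log z| := by nlinarith
        _ = |Real.log z| * z := by ring
    · have := (tendsto_log_mul_rpow_nhdsGT_zero zero_lt_one).abs
      simpa using this
  have key : ∀ z ∈ Set.Ioi (0:ℝ), negEi z - Real.log z
      = ((Real.exp (-z) - 1) * Real.log z + ∫ t in Set.Ioc 0 z, Real.exp (-t) * Real.log t)
        + Real.eulerMascheroniConstant := by
    intro z hz
    have h1 := integral_Ioi_f1 hz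
    have h2 := f1_split hz
    rw [integral_f1_eq] at h2
    have h3 : (Real.exp (-z) - 1) * Real.log z
        = Real.exp (-z) * Real.log z - Real.log z := by ring
    rw [gg] at h1
    linarith
  have := ((hA.add termB_tendsto).add_const Real.eulerMascheroniConstant)
  rw [zero_add, zero_add] at this
  exact this.congr' (by filter_upwards [self_mem_nhdsWithin] with z hz using (key z hz).symm)


lemma correction_tendsto {a : ℝ} (ha : 0 < a) :
    Tendsto (fun b : ℝ => negEi (a / (4 * b ^ 2)) - Real.log a
      + (Real.log (4 * b ^ 2) - Real.eulerMascheroniConstant)) atTop (nhds 0) := by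
  have h4b : Tendsto (fun b : ℝ => 4 * b ^ 2) atTop atTop :=
    (tendsto_pow_atTop two_ne_zero).const_mul_atTop (by norm_num)
  have hz : Tendsto (fun b : ℝ => a / (4 * b ^ 2)) atTop (nhdsWithin 0 (Set.Ioi 0)) := by
    rw [tendsto_nhdsWithin_iff]
    constructor
    · exact Tendsto.div_atTop tendsto_const_nhds h4b
    · filter_upwards [eventually_gt_atTop (0:ℝ)] with b hb
      exact div_pos ha (by positivity)
  have hcomp := negEi_sub_log_tendsto.comp hz
  have := hcomp.sub_const Real.eulerMascheroniConstant
  rw [sub_self] at this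
  refine this.congr' ?_
  filter_upwards [eventually_gt_atTop (0:ℝ)] with b hb
  have h4 : (0:ℝ) < 4 * b ^ 2 := by positivity
  simp only [Function.comp_apply]
  rw [Real.log_div ha.ne' h4.ne']
  ring


lemma sum_sq_pos {N : ℕ} {u v : Fin N → ℝ} (h : u ≠ v) : 0 < ∑ k, (u k - v k) ^ 2 := by
  obtain ⟨k, hk⟩ := Function.ne_iff.mp h
  apply Finset.sum_pos' (fun j _ => sq_nonneg _)
  exact ⟨k, Finset.mem_univ k, lt_of_le_of_ne (sq_nonneg _)
    (Ne.symm (pow_ne_zero 2 (sub_ne_zero.mpr hk)))⟩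

lemma sum_expand {n : ℕ} (w d A B : Fin n → ℝ) (C : ℝ) :
    ∑ i, w i * d i * (A i - B i + C)
      = (∑ i, w i * d i * A i) - (∑ i, w i * d i * B i) + C * ∑ i, w i * d i := by
  rw [Finset.mul_sum, ← Finset.sum_sub_distrib, ← Finset.sum_add_distrib]
  apply Finset.sum_congr rfl
  intros; ring


end Aux

theorem gradient_large_bmax_expansion
    (N M L : ℕ) (hN : 1 ≤ N)
    (y : Fin M → Fin N → ℝ) (wy : Fin M → ℝ) (hwy : ∀ i, 0 < wy i)
    (hsy : ∑ i, wy i = 1)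
    (x : Fin L → Fin N → ℝ) (wx : Fin L → ℝ) (hwx : ∀ i, 0 < wx i)
    (hsx : ∑ i, wx i = 1)
    (ξ : Fin L) (η : Fin N)
    (hxy : ∀ i, x ξ ≠ y i) (hxx : ∀ i, i ≠ ξ → x ξ ≠ x i) :
    Filter.Tendsto (fun bmax : ℝ =>
      (Real.pi ^ ((N : ℝ) / 2) / 2 * wx ξ *
        ((∑ i, wx i * (x ξ η - x i η) * negEi ((∑ k, (x ξ k - x i k) ^ 2) / (4 * bmax ^ 2)))
          - ∑ i, wy i * (x ξ η - y i η) * negEi ((∑ k, (x ξ k - y i k) ^ 2) / (4 * bmax ^ 2))))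
      - (Real.pi ^ ((N : ℝ) / 2) / 2 * wx ξ *
          ((∑ i, wx i * (x ξ η - x i η) * Real.log (∑ k, (x ξ k - x i k) ^ 2))
            - (∑ i, wy i * (x ξ η - y i η) * Real.log (∑ k, (x ξ k - y i k) ^ 2))
            + (Real.log (4 * bmax ^ 2) - Real.eulerMascheroniConstant) *
                (∑ i, wx i * x i η - ∑ i, wy i * y i η))))
      Filter.atTop (nhds 0) := by
  set c : ℝ := Real.pi ^ ((N : ℝ) / 2) / 2 * wx ξ with hc
  set γ' := Real.eulerMascheroniConstant with hγ'
  -- per-index correction functions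
  set hX : Fin L → ℝ → ℝ := fun i b =>
    negEi ((∑ k, (x ξ k - x i k) ^ 2) / (4 * b ^ 2)) - Real.log (∑ k, (x ξ k - x i k) ^ 2)
      + (Real.log (4 * b ^ 2) - γ') with hhX
  set hY : Fin M → ℝ → ℝ := fun i b =>
    negEi ((∑ k, (x ξ k - y i k) ^ 2) / (4 * b ^ 2)) - Real.log (∑ k, (x ξ k - y i k) ^ 2)
      + (Real.log (4 * b ^ 2) - γ') with hhY
  have hsum_x : ∑ i, wx i * (x ξ η - x i η) = x ξ η - ∑ i, wx i * x i η := by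
    have : ∀ i ∈ Finset.univ, wx i * (x ξ η - x i η) = wx i * x ξ η - wx i * x i η :=
      fun i _ => by ring
    rw [Finset.sum_congr rfl this, Finset.sum_sub_distrib, ← Finset.sum_mul, hsx, one_mul]
  have hsum_y : ∑ i, wy i * (x ξ η - y i η) = x ξ η - ∑ i, wy i * y i η := by
    have : ∀ i ∈ Finset.univ, wy i * (x ξ η - y i η) = wy i * x ξ η - wy i * y i η :=
      fun i _ => by ring
    rw [Finset.sum_congr rfl this, Finset.sum_sub_distrib, ← Finset.sum_mul, hsy, one_mul]
  have hEq : ∀ b : ℝ,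
      (c * ((∑ i, wx i * (x ξ η - x i η) * negEi ((∑ k, (x ξ k - x i k) ^ 2) / (4 * b ^ 2)))
          - ∑ i, wy i * (x ξ η - y i η) * negEi ((∑ k, (x ξ k - y i k) ^ 2) / (4 * b ^ 2))))
      - (c * ((∑ i, wx i * (x ξ η - x i η) * Real.log (∑ k, (x ξ k - x i k) ^ 2))
            - (∑ i, wy i * (x ξ η - y i η) * Real.log (∑ k, (x ξ k - y i k) ^ 2))
            + (Real.log (4 * b ^ 2) - γ') * (∑ i, wx i * x i η - ∑ i, wy i * y i η)))
      = c * ((∑ i, wx i * (x ξ η - x i η) * hX i b) - ∑ i, wy i * (x ξ η - y i η) * hY i b) := by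
    intro b
    rw [hhX, hhY]
    rw [sum_expand wx (fun i => x ξ η - x i η)
      (fun i => negEi ((∑ k, (x ξ k - x i k) ^ 2) / (4 * b ^ 2)))
      (fun i => Real.log (∑ k, (x ξ k - x i k) ^ 2)) (Real.log (4 * b ^ 2) - γ')]
    rw [sum_expand wy (fun i => x ξ η - y i η)
      (fun i => negEi ((∑ k, (x ξ k - y i k) ^ 2) / (4 * b ^ 2)))
      (fun i => Real.log (∑ k, (x ξ k - y i k) ^ 2)) (Real.log (4 * b ^ 2) - γ')]
    rw [hsum_x, hsum_y]
    ring
  have hXt : ∀ i : Fin L, Tendsto (fun b => wx i * (x ξ η - x i η) * hX i b) atTop (nhds 0) := by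
    intro i
    by_cases hi : i = ξ
    · have : (fun b => wx i * (x ξ η - x i η) * hX i b) = fun _ => 0 := by
        funext b; rw [hi]; simp
      rw [this]; exact tendsto_const_nhds
    · have ha : 0 < ∑ k, (x ξ k - x i k) ^ 2 := sum_sq_pos (hxx i hi)
      have := (correction_tendsto ha).const_mul (wx i * (x ξ η - x i η))
      rw [mul_zero] at this
      exact this
  have hYt : ∀ i : Fin M, Tendsto (fun b => wy i * (x ξ η - y i η) * hY i b) atTop (nhds 0) := by
    intro i
    have ha : 0 < ∑ k, (x ξ k - y i k) ^ 2 := sum_sq_pos (hxy i)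
    have := (correction_tendsto ha).const_mul (wy i * (x ξ η - y i η))
    rw [mul_zero] at this
    exact this
  have hsumX : Tendsto (fun b => ∑ i, wx i * (x ξ η - x i η) * hX i b) atTop (nhds 0) := by
    have := tendsto_finset_sum Finset.univ (fun i _ => hXt i)
    simpa using this
  have hsumY : Tendsto (fun b => ∑ i, wy i * (x ξ η - y i η) * hY i b) atTop (nhds 0) := by
    have := tendsto_finset_sum Finset.univ (fun i _ => hYt i)
    simpa using this
  have hF : Tendsto (fun b => c * ((∑ i, wx i * (x ξ η - x i η) * hX i b)
      - ∑ i, wy i * (x ξ η - y i η) * hY i b)) atTop (nhds 0) := by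
    have := (hsumX.sub hsumY).const_mul c
    simpa using this
  exact hF.congr (fun b => (hEq b).symm)
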